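/- Let s and n be positive integers with gcd(s,n) = 1, and for each positive integer d let φ(s,d,n) = #{k : 1 ≤ k ≤ n and gcd(s + (k−1)d, n) = 1}. Then the mean value M(φ(s,·,n)) of the function d ↦ φ(s,d,n) exists and equals n · Π_{p | n} (1 − 1/p + 1/p²), the product being over the prime divisors p of n. -/

import Mathlib

open Finset Filter Topology ArithmeticFunction
open scoped ArithmeticFunction.Moebius


-- squarefree radical
lemma sf_rad (n : ℕ) : Squarefree (∏ p ∈ n.primeFactors, p) := by
  classical
  have h : ∀ s : Finset ℕ, (∀ p ∈ s, p.Prime) → Squarefree (∏ p ∈ s, p) := by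
    intro s
    induction s using Finset.induction with
    | empty => simp
    | insert a t hx ih =>
      intro hp
      rw [Finset.prod_insert hx]
      have ha : Nat.Prime a := hp a (Finset.mem_insert_self a t)
      have hcop : Nat.Coprime a (∏ p ∈ t, p) := by
        apply Nat.Coprime.prod_right
        intro q hq
        exact (Nat.coprime_primes ha (hp q (Finset.mem_insert_of_mem hq))).mpr
          (fun h => hx (h ▸ hq))
      rw [Nat.squarefree_mul hcop]
      exact ⟨ha.squarefree, ih (fun p hp' => hp p (Finset.mem_insert_of_mem hp'))⟩
  exact h _ (fun p hp => Nat.prime_of_mem_primeFactors hp)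

-- Möbius sum over divisors = product over prime factors
lemma moebius_sum_eq_prod (n : ℕ) (hn : n ≠ 0) (f : ArithmeticFunction ℝ)
    (hf : f.IsMultiplicative) :
    ∑ e ∈ n.divisors, (μ e : ℝ) * f e = ∏ p ∈ n.primeFactors, (1 - f p) := by
  classical
  set r := ∏ p ∈ n.primeFactors, p with hr
  have hsf : Squarefree r := sf_rad n
  have hrn : r ∣ n := Nat.prod_primeFactors_dvd n
  have hr0 : r ≠ 0 := hsf.ne_zero
  have hpf : r.primeFactors = n.primeFactors :=
    Nat.primeFactors_prod (fun p hp => Nat.prime_of_mem_primeFactors hp)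
  have hsum : ∑ e ∈ n.divisors, (μ e : ℝ) * f e = ∑ e ∈ r.divisors, (μ e : ℝ) * f e := by
    rw [eq_comm]
    apply Finset.sum_subset (Nat.divisors_subset_of_dvd hn hrn)
    intro e he hne
    have he' : e ∣ n := (Nat.mem_divisors.mp he).1
    have he0 : e ≠ 0 := by
      rintro rfl; exact hn (zero_dvd_iff.mp he')
    by_cases hesf : Squarefree e
    · exfalso
      apply hne
      rw [Nat.mem_divisors]
      refine ⟨?_, hr0⟩
      calc e = ∏ p ∈ e.primeFactors, p := (Nat.prod_primeFactors_of_squarefree hesf).symm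
        _ ∣ r := Finset.prod_dvd_prod_of_subset _ _ _ (Nat.primeFactors_mono he' hn)
    · simp [moebius_eq_zero_of_not_squarefree hesf]
  rw [hsum, ← hpf, hf.prodPrimeFactors_one_sub_of_squarefree f hsf]


-- count over ZMod e of pairs with product a fixed unit
lemma card_pairs_mul (e : ℕ) [NeZero e] (c : ZMod e) (hc : IsUnit c) :
    ((univ : Finset (ZMod e × ZMod e)).filter fun q => q.1 * q.2 = c).card = e.totient := by
  rw [← ZMod.card_units_eq_totient e, ← Finset.card_univ]
  have key : ∀ q ∈ ((univ : Finset (ZMod e × ZMod e)).filter fun q => q.1 * q.2 = c),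
      IsUnit q.1 := by
    intro q hq
    have h := (Finset.mem_filter.mp hq).2
    exact isUnit_of_mul_isUnit_left (h ▸ hc)
  refine Finset.card_bij' (fun q hq => (key q hq).unit)
    (fun u _ => ((u : ZMod e), ((u⁻¹ : (ZMod e)ˣ) : ZMod e) * c))
    (fun q hq => Finset.mem_univ _) (fun u hu => ?_) (fun q hq => ?_) (fun u hu => ?_)
  · simp [Finset.mem_filter, Units.mul_inv_cancel_left]
  · have h := (Finset.mem_filter.mp hq).2
    set u := (key q hq).unit with hu
    have h1 : (u : ZMod e) = q.1 := IsUnit.unit_spec _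
    refine Prod.ext h1 ?_
    show ((u⁻¹ : (ZMod e)ˣ) : ZMod e) * c = q.2
    rw [← h, ← h1, Units.inv_mul_cancel_left]
  · exact Units.ext (IsUnit.unit_spec _)

-- nat pairs in range e ↔ ZMod e pairs
lemma card_nat_pairs (s e : ℕ) [NeZero e] :
    ((range e ×ˢ range e).filter fun p => e ∣ s + p.2 * p.1).card
      = ((univ : Finset (ZMod e × ZMod e)).filter fun q => q.1 * q.2 = -(s : ZMod e)).card := by
  apply Finset.card_nbij' (fun p => (((p.2 : ℕ) : ZMod e), ((p.1 : ℕ) : ZMod e)))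
    (fun q => ((q.2.val : ℕ), (q.1.val : ℕ)))
  · intro p hp
    simp only [Finset.mem_coe, Finset.mem_filter, Finset.mem_product, Finset.mem_range] at hp
    simp only [Finset.mem_coe, Finset.mem_filter, Finset.mem_univ, true_and]
    have := (ZMod.natCast_eq_zero_iff (s + p.2 * p.1) e).mpr hp.2
    push_cast at this
    linear_combination this
  · intro q hq
    simp only [Finset.mem_coe, Finset.mem_filter, Finset.mem_univ, true_and] at hq
    simp only [Finset.mem_coe, Finset.mem_filter, Finset.mem_product, Finset.mem_range]
    refine ⟨⟨ZMod.val_lt _, ZMod.val_lt _⟩, ?_⟩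
    rw [← ZMod.natCast_eq_zero_iff]
    push_cast
    rw [ZMod.natCast_zmod_val, ZMod.natCast_zmod_val, hq]
    ring
  · intro p hp
    simp only [Finset.mem_coe, Finset.mem_filter, Finset.mem_product, Finset.mem_range] at hp
    simp [ZMod.val_cast_of_lt hp.1.1, ZMod.val_cast_of_lt hp.1.2]
  · intro q hq
    simp [ZMod.natCast_zmod_val]


lemma dvd_iff_of_modEq (e s a b : ℕ) (h : a ≡ b [MOD e]) : (e ∣ s + a ↔ e ∣ s + b) := by
  have h2 : s + a ≡ s + b [MOD e] := Nat.ModEq.add_left s h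
  constructor
  · intro hd
    exact (Nat.modEq_zero_iff_dvd).mp (h2.symm.trans ((Nat.modEq_zero_iff_dvd).mpr hd))
  · intro hd
    exact (Nat.modEq_zero_iff_dvd).mp (h2.trans ((Nat.modEq_zero_iff_dvd).mpr hd))

lemma card_scale (s n e : ℕ) (he : e ∣ n) (he0 : 0 < e) :
    ((range n ×ˢ range n).filter fun p => e ∣ s + p.2 * p.1).card
      = ((range e ×ˢ range e).filter fun p => e ∣ s + p.2 * p.1).card * ((n / e) * (n / e)) := by
  have hmod : ∀ a t : ℕ, a + e * t ≡ a [MOD e] := by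
    intro a t
    show (a + e * t) % e = a % e
    rw [Nat.add_mul_mod_self_left]
  rw [← Finset.card_range (n/e), ← Finset.card_product, ← Finset.card_product]
  apply Finset.card_nbij' (fun p => ((p.1 % e, p.2 % e), (p.1 / e, p.2 / e)))
    (fun q => (q.1.1 + e * q.2.1, q.1.2 + e * q.2.2))
  · intro p hp
    simp only [Finset.mem_coe, Finset.mem_filter, Finset.mem_product, Finset.mem_range] at hp ⊢
    refine ⟨⟨⟨Nat.mod_lt _ he0, Nat.mod_lt _ he0⟩, ?_⟩,
      Nat.div_lt_div_of_lt_of_dvd he hp.1.1, Nat.div_lt_div_of_lt_of_dvd he hp.1.2⟩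
    exact (dvd_iff_of_modEq e s _ _ ((Nat.mod_modEq p.2 e).mul (Nat.mod_modEq p.1 e))).mpr hp.2
  · intro q hq
    simp only [Finset.mem_coe, Finset.mem_filter, Finset.mem_product, Finset.mem_range] at hq ⊢
    obtain ⟨⟨⟨ha1, ha2⟩, hdvd⟩, ht1, ht2⟩ := hq
    have hlt : ∀ a t : ℕ, a < e → t < n / e → a + e * t < n := by
      intro a t ha ht
      calc a + e * t < e + e * t := by omega
        _ = e * (t + 1) := by ring
        _ ≤ e * (n / e) := Nat.mul_le_mul_left e ht
        _ = n := Nat.mul_div_cancel' he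
    refine ⟨⟨hlt _ _ ha1 ht1, hlt _ _ ha2 ht2⟩, ?_⟩
    exact (dvd_iff_of_modEq e s _ _ ((hmod _ _).mul (hmod _ _))).mpr hdvd
  · intro p hp
    simp [Nat.mod_add_div]
  · intro q hq
    simp only [Finset.mem_coe, Finset.mem_filter, Finset.mem_product, Finset.mem_range] at hq
    obtain ⟨⟨⟨ha1, ha2⟩, hdvd⟩, ht1, ht2⟩ := hq
    have h1 : ∀ a t : ℕ, a < e → (a + e * t) % e = a := by
      intro a t ha
      rw [Nat.add_mul_mod_self_left, Nat.mod_eq_of_lt ha]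
    have h2 : ∀ a t : ℕ, a < e → (a + e * t) / e = t := by
      intro a t ha
      rw [Nat.add_mul_div_left _ _ he0, Nat.div_eq_of_lt ha, zero_add]
    simp [h1 _ _ ha1, h1 _ _ ha2, h2 _ _ ha1, h2 _ _ ha2]


lemma moebius_ind (m n : ℕ) (hn : n ≠ 0) :
    (if Nat.gcd m n = 1 then (1 : ℝ) else 0)
      = ∑ e ∈ n.divisors, if e ∣ m then (μ e : ℝ) else 0 := by
  classical
  rw [Finset.sum_ite, Finset.sum_const_zero, add_zero]
  have hset : n.divisors.filter (· ∣ m) = (Nat.gcd m n).divisors := by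
    ext e
    simp only [Finset.mem_filter, Nat.mem_divisors, Nat.dvd_gcd_iff]
    constructor
    · rintro ⟨⟨h1, _⟩, h2⟩
      exact ⟨⟨h2, h1⟩, Nat.gcd_ne_zero_right hn⟩
    · rintro ⟨⟨h1, h2⟩, _⟩
      exact ⟨⟨h2, hn⟩, h1⟩
  rw [hset]
  have := congrArg (fun f => f (Nat.gcd m n)) (coe_moebius_mul_coe_zeta (R := ℝ))
  simp only [coe_mul_zeta_apply, one_apply, intCoe_apply] at this
  rw [this]

noncomputable def totdiv : ArithmeticFunction ℝ := ⟨fun e => (e.totient : ℝ) / (e : ℝ) ^ 2, by simp⟩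

lemma totdiv_apply (e : ℕ) : totdiv e = (e.totient : ℝ) / (e : ℝ) ^ 2 := rfl

lemma totdiv_mult : totdiv.IsMultiplicative := by
  constructor
  · simp [totdiv_apply]
  · intro m n h
    rcases eq_or_ne m 0 with rfl | hm
    · simp [totdiv_apply]
    rcases eq_or_ne n 0 with rfl | hn
    · simp [totdiv_apply]
    simp only [totdiv_apply, Nat.totient_mul h]
    push_cast
    rw [div_mul_div_comm, mul_pow]

lemma T_eq (s n : ℕ) (hn : 0 < n) (hsn : Nat.gcd s n = 1) :
    ∑ d ∈ range n, ∑ j ∈ range n, (if Nat.gcd (s + j * d) n = 1 then (1 : ℝ) else 0)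
      = (n : ℝ) ^ 2 * ∏ p ∈ n.primeFactors, (1 - 1 / (p : ℝ) + 1 / (p : ℝ) ^ 2) := by
  classical
  have hn0 : n ≠ 0 := hn.ne'
  calc ∑ d ∈ range n, ∑ j ∈ range n, (if Nat.gcd (s + j * d) n = 1 then (1 : ℝ) else 0)
      = ∑ d ∈ range n, ∑ j ∈ range n, ∑ e ∈ n.divisors,
          (if e ∣ s + j * d then (μ e : ℝ) else 0) := by
        refine Finset.sum_congr rfl fun d _ => Finset.sum_congr rfl fun j _ => ?_
        exact moebius_ind _ n hn0
    _ = ∑ d ∈ range n, ∑ e ∈ n.divisors, ∑ j ∈ range n,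
          (if e ∣ s + j * d then (μ e : ℝ) else 0) := by
        exact Finset.sum_congr rfl fun d _ => Finset.sum_comm
    _ = ∑ e ∈ n.divisors, ∑ d ∈ range n, ∑ j ∈ range n,
          (if e ∣ s + j * d then (μ e : ℝ) else 0) := Finset.sum_comm
    _ = ∑ e ∈ n.divisors, (μ e : ℝ) *
          (((range n ×ˢ range n).filter fun p => e ∣ s + p.2 * p.1).card : ℝ) := by
        refine Finset.sum_congr rfl fun e _ => ?_
        rw [← Finset.sum_product']
        rw [Finset.sum_ite, Finset.sum_const_zero, add_zero, Finset.sum_const,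
          nsmul_eq_mul, mul_comm]
    _ = ∑ e ∈ n.divisors, (n : ℝ) ^ 2 * ((μ e : ℝ) * totdiv e) := by
        refine Finset.sum_congr rfl fun e he => ?_
        obtain ⟨hed, -⟩ := Nat.mem_divisors.mp he
        have he0 : e ≠ 0 := by rintro rfl; exact hn0 (zero_dvd_iff.mp hed)
        haveI : NeZero e := ⟨he0⟩
        have hse : Nat.Coprime s e := Nat.Coprime.coprime_dvd_right hed hsn
        have hu : IsUnit (-(s : ZMod e)) := ((ZMod.isUnit_iff_coprime s e).mpr hse).neg
        rw [card_scale s n e hed (Nat.pos_of_ne_zero he0), card_nat_pairs s e,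
          card_pairs_mul e _ hu]
        rw [totdiv_apply]
        push_cast [Nat.cast_div hed (by exact_mod_cast he0 : (e:ℝ) ≠ 0)]
        have he0' : (e : ℝ) ≠ 0 := by exact_mod_cast he0
        field_simp
    _ = (n : ℝ) ^ 2 * ∏ p ∈ n.primeFactors, (1 - 1 / (p : ℝ) + 1 / (p : ℝ) ^ 2) := by
        rw [← Finset.mul_sum, moebius_sum_eq_prod n hn0 totdiv totdiv_mult]
        congr 1
        refine Finset.prod_congr rfl fun p hp => ?_
        have hpp : p.Prime := Nat.prime_of_mem_primeFactors hp
        have hp0 : (p : ℝ) ≠ 0 := by exact_mod_cast hpp.ne_zero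
        rw [totdiv_apply, Nat.totient_prime hpp, Nat.cast_pred hpp.pos]
        field_simp
        ring

lemma periodic_sum_decomp (n : ℕ) (g : ℕ → ℝ) (hg : ∀ j, g (j + n) = g j) (m : ℕ) :
    ∑ j ∈ range m, g j = (m / n : ℕ) * (∑ j ∈ range n, g j) + ∑ j ∈ range (m % n), g j := by
  have shift : ∀ r : ℕ, ∑ x ∈ range n, g (r + x) = ∑ x ∈ range n, g x := by
    intro r
    induction r with
    | zero => simp
    | succ r ih =>
      rw [← ih]
      have a1 : ∑ x ∈ range n, g (r + 1 + x) = ∑ x ∈ range n, g (r + (x + 1)) := by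
        refine Finset.sum_congr rfl fun x _ => ?_
        congr 1
        omega
      have a2 : ∑ x ∈ range n, g (r + (x + 1)) + g (r + 0) =
          ∑ x ∈ range n, g (r + x) + g (r + n) := by
        rw [← Finset.sum_range_succ' (fun x => g (r + x)) n, Finset.sum_range_succ]
      have a3 : g (r + n) = g (r + 0) := by rw [hg, add_zero]
      rw [a3] at a2
      rw [a1]
      linarith
  have key : ∀ q r : ℕ, ∑ j ∈ range (q * n + r), g j
      = q * (∑ j ∈ range n, g j) + ∑ j ∈ range r, g j := by
    intro q
    induction q with
    | zero => simp
    | succ q ih =>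
      intro r
      have h1 : (q + 1) * n + r = (q * n + r) + n := by ring
      rw [h1, Finset.sum_range_add, ih r, shift (q * n + r)]
      push_cast
      ring
  have hm : m / n * n + m % n = m := by rw [Nat.mul_comm]; exact Nat.div_add_mod m n
  have := key (m / n) (m % n)
  rw [hm] at this
  exact this

lemma periodic_avg (n : ℕ) (hn : 0 < n) (g : ℕ → ℝ) (hg : ∀ j, g (j + n) = g j) :
    Tendsto (fun x : ℝ => (∑ j ∈ range ⌊x⌋₊, g j) / x) atTop
      (𝓝 ((∑ j ∈ range n, g j) / n)) := by
  set S := ∑ j ∈ range n, g j with hS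
  set B := ∑ j ∈ range n, |g j| with hB
  have hR : ∀ m : ℕ, |∑ j ∈ range (m % n), g j| ≤ B := by
    intro m
    calc |∑ j ∈ range (m % n), g j| ≤ ∑ j ∈ range (m % n), |g j| :=
          Finset.abs_sum_le_sum_abs _ _
      _ ≤ B := Finset.sum_le_sum_of_subset_of_nonneg
          (Finset.range_subset_range.mpr (Nat.mod_lt m hn).le)
          (fun i _ _ => abs_nonneg _)
  have hn' : (0:ℝ) < n := by exact_mod_cast hn
  have hinv : Tendsto (fun x : ℝ => 1 / x) atTop (𝓝 0) := by
    simpa [one_div] using (tendsto_inv_atTop_zero : Tendsto (fun x : ℝ => x⁻¹) atTop (𝓝 0))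
  have hq : Tendsto (fun x : ℝ => ((⌊x⌋₊ / n : ℕ) : ℝ) / x) atTop (𝓝 (1 / n)) := by
    apply tendsto_of_tendsto_of_tendsto_of_le_of_le'
      (g := fun x : ℝ => 1 / n - ((n + 1) / n) * (1 / x)) (h := fun _ : ℝ => 1 / (n:ℝ))
    · have := (hinv.const_mul (((n:ℝ) + 1) / n)).const_sub (1 / (n:ℝ))
      simpa using this
    · exact tendsto_const_nhds
    · filter_upwards [eventually_ge_atTop (1:ℝ)] with x hx
      have hx0 : (0:ℝ) < x := lt_of_lt_of_le one_pos hx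
      set m : ℕ := ⌊x⌋₊ with hm
      have hfl : x - 1 < (m:ℝ) := by
        have := Nat.lt_floor_add_one x
        linarith
      have hdm : (m:ℝ) < n * ((m / n : ℕ) : ℝ) + n := by
        have h1 := Nat.div_add_mod m n
        have h2 := Nat.mod_lt m hn
        have : m < n * (m / n) + n := by omega
        exact_mod_cast this
      have key : 1 / n - ((n + 1) / n) * (1 / x) = ((x - (n + 1)) / n) / x := by
        field_simp
        try ring
      rw [key, div_le_div_iff_of_pos_right hx0]
      rw [div_le_iff₀ hn']
      nlinarith [hdm, hfl]
    · filter_upwards [eventually_ge_atTop (1:ℝ)] with x hx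
      have hx0 : (0:ℝ) < x := lt_of_lt_of_le one_pos hx
      have h2 : (⌊x⌋₊ : ℝ) ≤ x := Nat.floor_le (le_of_lt hx0)
      have h1 : ((⌊x⌋₊ / n : ℕ) : ℝ) ≤ x / n := le_trans Nat.cast_div_le (by gcongr)
      calc ((⌊x⌋₊ / n : ℕ) : ℝ) / x ≤ (x / n) / x := by gcongr
        _ = 1 / n := by
            rw [div_div, mul_comm, ← div_div, div_self hx0.ne']
  have hRx : Tendsto (fun x : ℝ => (∑ j ∈ range (⌊x⌋₊ % n), g j) / x) atTop (𝓝 0) := by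
    have hbound : ∀ᶠ x : ℝ in atTop,
        ‖(∑ j ∈ range (⌊x⌋₊ % n), g j) / x‖ ≤ B / x := by
      filter_upwards [eventually_ge_atTop (1:ℝ)] with x hx
      have hx0 : (0:ℝ) < x := lt_of_lt_of_le one_pos hx
      rw [Real.norm_eq_abs, abs_div, abs_of_pos hx0]
      exact div_le_div_of_nonneg_right (hR _) hx0.le |>.trans_eq rfl
    have hlim : Tendsto (fun x : ℝ => B / x) atTop (𝓝 0) := by
      simpa using tendsto_const_nhds.div_atTop (tendsto_id (α := ℝ))
    exact squeeze_zero_norm' hbound hlim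
  have main : Tendsto (fun x : ℝ => ((⌊x⌋₊ / n : ℕ) : ℝ) / x * S
      + (∑ j ∈ range (⌊x⌋₊ % n), g j) / x) atTop (𝓝 (1 / n * S + 0)) :=
    (hq.mul_const S).add hRx
  have heq : ∀ x : ℝ, (∑ j ∈ range ⌊x⌋₊, g j) / x
      = ((⌊x⌋₊ / n : ℕ) : ℝ) / x * S + (∑ j ∈ range (⌊x⌋₊ % n), g j) / x := by
    intro x
    rw [periodic_sum_decomp n g hg ⌊x⌋₊]
    ring
  have : Tendsto (fun x : ℝ => (∑ j ∈ range ⌊x⌋₊, g j) / x) atTop (𝓝 (1 / n * S + 0)) := by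
    apply main.congr
    intro x
    exact (heq x).symm
  simpa [one_div, div_eq_inv_mul] using this


/-- For `gcd(s,n) = 1`, the mean value of `d ↦ φ(s,d,n) = #{1 ≤ k ≤ n : gcd(s+(k−1)d, n) = 1}`
exists and equals `n ∏_{p ∣ n} (1 − 1/p + 1/p²)`. -/
theorem meanValue_maxsein (s n : ℕ) (hs : 0 < s) (hn : 0 < n) (hsn : Nat.gcd s n = 1) :
    Tendsto
      (fun x : ℝ =>
        (∑ d ∈ Finset.Icc 1 ⌊x⌋₊,
          (((Finset.Icc 1 n).filter (fun k => Nat.gcd (s + (k - 1) * d) n = 1)).card : ℝ)) / x)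
      atTop
      (𝓝 ((n : ℝ) * ∏ p ∈ n.primeFactors, (1 - 1 / (p : ℝ) + 1 / (p : ℝ) ^ 2))) := by
  classical
  set F : ℕ → ℝ :=
    fun d => (((Finset.Icc 1 n).filter (fun k => Nat.gcd (s + (k - 1) * d) n = 1)).card : ℝ)
    with hFdef
  have hF : ∀ d, F (d + n) = F d := by
    intro d
    simp only [hFdef]
    congr 1
    have : (Finset.Icc 1 n).filter (fun k => Nat.gcd (s + (k - 1) * (d + n)) n = 1)
        = (Finset.Icc 1 n).filter (fun k => Nat.gcd (s + (k - 1) * d) n = 1) := by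
      apply Finset.filter_congr
      intro k _
      have h5 : s + (k - 1) * (d + n) = (s + (k - 1) * d) + (k - 1) * n := by ring
      rw [h5, Nat.gcd_add_mul_right_left]
    rw [this]
  have hg : ∀ j, (fun j => F (1 + j)) (j + n) = (fun j => F (1 + j)) j := by
    intro j
    simp only []
    rw [show 1 + (j + n) = (1 + j) + n by ring, hF]
  -- reindex Icc 1 m ↦ range m
  have hIcc : ∀ (m : ℕ) (h : ℕ → ℝ), ∑ d ∈ Finset.Icc 1 m, h d = ∑ j ∈ range m, h (1 + j) := by
    intro m h
    apply Finset.sum_nbij' (fun d => d - 1) (fun j => 1 + j)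
    · intro a ha
      simp only [Finset.mem_Icc] at ha
      simp only [Finset.mem_range]
      omega
    · intro a ha
      simp only [Finset.mem_range] at ha
      simp only [Finset.mem_Icc]
      omega
    · intro a ha
      simp only [Finset.mem_Icc] at ha
      omega
    · intro a ha
      omega
    · intro a ha
      simp only [Finset.mem_Icc] at ha
      congr 1
      omega
  have hlim := periodic_avg n hn (fun j => F (1 + j)) hg
  have hval : (∑ j ∈ range n, F (1 + j)) / n
      = (n : ℝ) * ∏ p ∈ n.primeFactors, (1 - 1 / (p : ℝ) + 1 / (p : ℝ) ^ 2) := by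
    have e1 : ∑ j ∈ range n, F (1 + j) = ∑ d ∈ range n, F d := by
      have h1 := Finset.sum_range_succ' F n
      have h2 := Finset.sum_range_succ F n
      have h3 : F n = F 0 := by
        have := hF 0
        rwa [zero_add] at this
      have h4 : ∑ i ∈ range n, F (i + 1) = ∑ i ∈ range n, F (1 + i) := by
        refine Finset.sum_congr rfl fun i _ => ?_
        rw [add_comm]
      rw [h1, h3] at h2
      rw [← h4]
      linarith
    have e2 : ∀ d, F d = ∑ j ∈ range n, (if Nat.gcd (s + j * d) n = 1 then (1 : ℝ) else 0) := by
      intro d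
      simp only [hFdef]
      rw [← Finset.sum_boole]
      rw [hIcc n]
      refine Finset.sum_congr rfl fun j _ => ?_
      rw [show 1 + j - 1 = j from by omega]
    rw [e1]
    have e3 : ∑ d ∈ range n, F d
        = ∑ d ∈ range n, ∑ j ∈ range n, (if Nat.gcd (s + j * d) n = 1 then (1 : ℝ) else 0) :=
      Finset.sum_congr rfl fun d _ => e2 d
    rw [e3, T_eq s n hn hsn]
    have hn' : (n : ℝ) ≠ 0 := by positivity
    field_simp
  rw [hval] at hlim
  apply hlim.congr
  intro x
  rw [hIcc ⌊x⌋₊ F]
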